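/- arXiv:2408.12094 — 2 statements merged into one kernel-verified Lean document; each statement's English description precedes it below -/
import Mathlib

section
/- Let f : ℝ → X be bounded and continuous and define u(t) := ∫_ℝ G(t,τ) f(τ) dτ. Then u is a bounded mild solution on the whole line, i.e. u(t) = U(t,s) u(s) + ∫_s^t U(t,τ) f(τ) dτ for all s ≤ t. -/
open MeasureTheory Real Filter Bornology

/-- An evolution family on a Banach space `X` together with an exponential dichotomy:
projections `P t`, the inverses `V s t` of the restrictions of `U t s` to the kernels
of the projections (i.e. `V s t = U_Q(s,t)` for `s ≤ t`), dichotomy constants `N, β`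
and a bound `H` on the norms of the projections. -/
structure EvolutionDichotomy (X : Type*) [NormedAddCommGroup X] [NormedSpace ℝ X] where
  U : ℝ → ℝ → X →L[ℝ] X
  P : ℝ → X →L[ℝ] X
  V : ℝ → ℝ → X →L[ℝ] X
  N : ℝ
  β : ℝ
  H : ℝ
  N_pos : 0 < N
  β_pos : 0 < β
  U_id : ∀ s, U s s = ContinuousLinearMap.id ℝ X
  U_comp : ∀ ⦃s r t : ℝ⦄, s ≤ r → r ≤ t → ∀ x, U t r (U r s x) = U t s x
  U_cont : ∀ x : X, ContinuousOn (fun p : ℝ × ℝ => U p.1 p.2 x) {p : ℝ × ℝ | p.2 ≤ p.1}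
  P_proj : ∀ t x, P t (P t x) = P t x
  P_cont : ∀ x : X, Continuous fun t => P t x
  P_bound : ∀ t, ‖P t‖ ≤ H
  comm : ∀ ⦃s t : ℝ⦄, s ≤ t → ∀ x, P t (U t s x) = U t s (P s x)
  V_mapsTo : ∀ ⦃s t : ℝ⦄, s ≤ t → ∀ x, P s (V s t (x - P t x)) = 0
  V_left : ∀ ⦃s t : ℝ⦄, s ≤ t → ∀ x, V s t (U t s (x - P s x)) = x - P s x
  V_right : ∀ ⦃s t : ℝ⦄, s ≤ t → ∀ x, U t s (V s t (x - P t x)) = x - P t x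
  P_decay : ∀ ⦃s t : ℝ⦄, s ≤ t → ∀ x, ‖U t s (P s x)‖ ≤ N * Real.exp (-β * (t - s)) * ‖x‖
  Q_decay : ∀ ⦃s t : ℝ⦄, s ≤ t → ∀ x, ‖V s t (x - P t x)‖ ≤ N * Real.exp (-β * (t - s)) * ‖x‖

namespace EvolutionDichotomy

variable {X : Type*} [NormedAddCommGroup X] [NormedSpace ℝ X]

/-- The complementary projection `Q t = Id - P t`. -/
noncomputable def Q (E : EvolutionDichotomy X) (t : ℝ) : X →L[ℝ] X :=
  ContinuousLinearMap.id ℝ X - E.P t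

/-- The Green function of the dichotomy: `G t s = P t ∘ U t s` for `t > s` and
`G t s = -(U_Q(t,s) ∘ Q s)` for `t ≤ s`. -/
noncomputable def G (E : EvolutionDichotomy X) (t s : ℝ) : X →L[ℝ] X :=
  if s < t then (E.P t).comp (E.U t s) else -((E.V t s).comp (E.Q s))

/-- The Green function is exponentially almost periodic. -/
def ExpAP (E : EvolutionDichotomy X) : Prop :=
  ∀ η > (0:ℝ), ∀ ε > (0:ℝ), ∃ γ > (0:ℝ), ∃ l > (0:ℝ), ∀ a : ℝ,
    ∃ T ∈ Set.Icc a (a + l), ∀ t s : ℝ, η ≤ |t - s| →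
      ‖E.G (t + T) (s + T) - E.G t s‖ ≤ ε * Real.exp (-γ * |t - s|)

end EvolutionDichotomy

/-- A bounded continuous function `f : ℝ → X` is (Bohr) almost periodic if for every `ε > 0`
there is `l > 0` such that every interval of length `l` contains an `ε`-almost period. -/
def AlmostPeriodic {X : Type*} [NormedAddCommGroup X] (f : ℝ → X) : Prop :=
  Continuous f ∧ Bornology.IsBounded (Set.range f) ∧
  ∀ ε > (0:ℝ), ∃ l > (0:ℝ), ∀ a : ℝ, ∃ T ∈ Set.Icc a (a + l),
    ∀ t : ℝ, ‖f (t + T) - f t‖ < ε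

/-- A function on `[0,∞)` is asymptotically almost periodic if it is the sum of an almost
periodic function and a continuous function vanishing at infinity. -/
def AsympAlmostPeriodic {X : Type*} [NormedAddCommGroup X] (g : ℝ → X) : Prop :=
  ∃ h φ : ℝ → X, AlmostPeriodic h ∧ ContinuousOn φ (Set.Ici 0) ∧
    Filter.Tendsto (fun t => ‖φ t‖) Filter.atTop (nhds 0) ∧
    ∀ t : ℝ, 0 ≤ t → g t = h t + φ t

/-- `PAP0`: bounded continuous functions with vanishing mean value. -/
def PAP0 {X : Type*} [NormedAddCommGroup X] (φ : ℝ → X) : Prop :=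
  Continuous φ ∧ Bornology.IsBounded (Set.range φ) ∧
  Filter.Tendsto (fun r : ℝ => (1 / (2 * r)) * ∫ t in (-r)..r, ‖φ t‖)
    Filter.atTop (nhds 0)

/-- A bounded continuous function is pseudo almost periodic if it is the sum of an almost
periodic function and a `PAP0` function. -/
def PseudoAP {X : Type*} [NormedAddCommGroup X] (f : ℝ → X) : Prop :=
  ∃ g φ : ℝ → X, AlmostPeriodic g ∧ PAP0 φ ∧ ∀ t : ℝ, f t = g t + φ t

namespace EvolutionDichotomy

variable {X : Type*} [NormedAddCommGroup X] [NormedSpace ℝ X]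

variable (E : EvolutionDichotomy X)

lemma Q_apply (t : ℝ) (x : X) : E.Q t x = x - E.P t x := rfl

lemma P_Q (t : ℝ) (x : X) : E.P t (E.Q t x) = 0 := by
  simp [Q_apply, map_sub, E.P_proj]

lemma Q_eq_self {t : ℝ} {x : X} (h : E.P t x = 0) : E.Q t x = x := by
  simp [Q_apply, h]

lemma Q_comm {s t : ℝ} (h : s ≤ t) (x : X) :
    E.Q t (E.U t s x) = E.U t s (E.Q s x) := by
  simp [Q_apply, E.comm h, map_sub]

lemma V_rightQ {s t : ℝ} (h : s ≤ t) (x : X) :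
    E.U t s (E.V s t (E.Q t x)) = E.Q t x := E.V_right h x

lemma V_leftQ {s t : ℝ} (h : s ≤ t) (x : X) :
    E.V s t (E.U t s (E.Q s x)) = E.Q s x := E.V_left h x

lemma V_mapsToQ {s t : ℝ} (h : s ≤ t) (x : X) :
    E.P s (E.V s t (E.Q t x)) = 0 := E.V_mapsTo h x

lemma Q_decayQ {s t : ℝ} (h : s ≤ t) (x : X) :
    ‖E.V s t (E.Q t x)‖ ≤ E.N * Real.exp (-E.β * (t - s)) * ‖x‖ := E.Q_decay h x

lemma exp_le_one' {s t : ℝ} (h : s ≤ t) : Real.exp (-E.β * (t - s)) ≤ 1 :=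
  Real.exp_le_one_iff.mpr (by nlinarith [E.β_pos])

lemma norm_VQ_le {s t : ℝ} (h : s ≤ t) (x : X) : ‖E.V s t (E.Q t x)‖ ≤ E.N * ‖x‖ := by
  calc ‖E.V s t (E.Q t x)‖ ≤ E.N * Real.exp (-E.β * (t - s)) * ‖x‖ := E.Q_decayQ h x
    _ ≤ E.N * 1 * ‖x‖ := by
        apply mul_le_mul_of_nonneg_right _ (norm_nonneg _)
        exact mul_le_mul_of_nonneg_left (E.exp_le_one' h) E.N_pos.le
    _ = E.N * ‖x‖ := by ring

lemma norm_UP_le {s t : ℝ} (h : s ≤ t) (x : X) : ‖E.U t s (E.P s x)‖ ≤ E.N * ‖x‖ := by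
  calc ‖E.U t s (E.P s x)‖ ≤ E.N * Real.exp (-E.β * (t - s)) * ‖x‖ := E.P_decay h x
    _ ≤ E.N * 1 * ‖x‖ := by
        apply mul_le_mul_of_nonneg_right _ (norm_nonneg _)
        exact mul_le_mul_of_nonneg_left (E.exp_le_one' h) E.N_pos.le
    _ = E.N * ‖x‖ := by ring

lemma V_uniq {s t : ℝ} (h : s ≤ t) {w : X} (x : X) (hP : E.P s w = 0)
    (hU : E.U t s w = E.Q t x) : E.V s t (E.Q t x) = w := by
  have h1 := E.V_left h w
  rw [hP, sub_zero] at h1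
  rw [← hU]; exact h1

lemma shiftV {s t τ : ℝ} (hst : s ≤ t) (htτ : t ≤ τ) (x : X) :
    E.U t s (E.V s τ (E.Q τ x)) = E.V t τ (E.Q τ x) := by
  refine (E.V_uniq htτ x ?_ ?_).symm
  · rw [E.comm hst, E.V_mapsToQ (hst.trans htτ), map_zero]
  · rw [E.U_comp hst htτ]
    exact E.V_rightQ (hst.trans htτ) x

lemma V_comp {t a b : ℝ} (hta : t ≤ a) (hab : a ≤ b) (x : X) :
    E.V t b (E.Q b x) = E.V t a (E.V a b (E.Q b x)) := by
  set y := E.V a b (E.Q b x) with hy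
  have hPy : E.P a y = 0 := E.V_mapsToQ hab x
  have hQy : E.Q a y = y := E.Q_eq_self hPy
  refine E.V_uniq (hta.trans hab) x ?_ ?_
  · conv_lhs => rw [← hQy]
    exact E.V_mapsToQ hta y
  · rw [← E.U_comp hta hab (E.V t a y)]
    have h1 : E.U a t (E.V t a y) = y := by
      conv_lhs => rw [← hQy]
      rw [E.V_rightQ hta y, hQy]
    rw [h1]
    exact E.V_rightQ hab x

lemma VQ_shift {a b : ℝ} (hab : a ≤ b) (z : X) :
    E.V a b (E.Q b z) - E.Q a z = E.V a b (E.Q b (z - E.U b a z)) := by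
  have h1 : E.Q a z = E.V a b (E.Q b (E.U b a z)) := by
    rw [E.Q_comm hab z]
    exact (E.V_leftQ hab z).symm
  rw [h1, ← map_sub, ← map_sub]

lemma normB_fst {t a : ℝ} (hta : t ≤ a) (y z : X) :
    ‖E.V t a (E.Q a y) - E.V t a (E.Q a z)‖ ≤ E.N * ‖y - z‖ := by
  rw [← map_sub, ← map_sub]
  exact E.norm_VQ_le hta _

lemma normB_shift {t a b : ℝ} (hta : t ≤ a) (hab : a ≤ b) (z : X) :
    ‖E.V t b (E.Q b z) - E.V t a (E.Q a z)‖ ≤ E.N * (E.N * ‖z - E.U b a z‖) := by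
  set w := E.V a b (E.Q b z) - E.Q a z with hw
  have hPw : E.P a w = 0 := by
    rw [hw, map_sub, E.V_mapsToQ hab, E.P_Q, sub_zero]
  have h1 : E.V t b (E.Q b z) - E.V t a (E.Q a z) = E.V t a (E.Q a w) := by
    rw [E.Q_eq_self hPw, hw, E.V_comp hta hab, ← map_sub]
  rw [h1]
  calc ‖E.V t a (E.Q a w)‖ ≤ E.N * ‖w‖ := E.norm_VQ_le hta w
    _ ≤ E.N * (E.N * ‖z - E.U b a z‖) := by
        apply mul_le_mul_of_nonneg_left _ E.N_pos.le
        rw [hw, E.VQ_shift hab]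
        exact E.norm_VQ_le hab _

lemma normA_fst {t a : ℝ} (hat : a ≤ t) (y z : X) :
    ‖E.U t a (E.P a y) - E.U t a (E.P a z)‖ ≤ E.N * ‖y - z‖ := by
  rw [← map_sub, ← map_sub]
  exact E.norm_UP_le hat _

lemma normA_shift {a b t : ℝ} (hab : a ≤ b) (hbt : b ≤ t) (z : X) :
    ‖E.U t b (E.P b z) - E.U t a (E.P a z)‖ ≤ E.N * ‖z - E.U b a z‖ := by
  have h1 : E.U t a (E.P a z) = E.U t b (E.P b (E.U b a z)) := by
    rw [E.comm hab, E.U_comp hab hbt]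
  rw [h1, ← map_sub, ← map_sub]
  exact E.norm_UP_le hbt _

lemma green_diff {s t : ℝ} (hst : s ≤ t) (τ : ℝ) (x : X) :
    E.G t τ x - E.U t s (E.G s τ x) = (Set.Ico s t).indicator (fun r => E.U t r x) τ := by
  by_cases h1 : τ < s
  · rw [Set.indicator_of_notMem (fun hm => absurd (Set.mem_Ico.mp hm).1 (not_le.mpr h1))]
    have ht : τ < t := lt_of_lt_of_le h1 hst
    simp only [G, if_pos h1, if_pos ht, ContinuousLinearMap.comp_apply]
    rw [← E.comm hst, E.U_comp h1.le hst]
    exact sub_self _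
  · by_cases h2 : τ < t
    · have hsτ : s ≤ τ := not_lt.mp h1
      rw [Set.indicator_of_mem (Set.mem_Ico.mpr ⟨hsτ, h2⟩)]
      simp only [G, if_pos h2, if_neg h1, ContinuousLinearMap.comp_apply,
        ContinuousLinearMap.neg_apply, map_neg]
      rw [sub_neg_eq_add]
      have e1 : E.U t s (E.V s τ (E.Q τ x)) = E.U t τ (E.Q τ x) := by
        rw [← E.U_comp hsτ h2.le (E.V s τ (E.Q τ x)), E.V_rightQ hsτ]
      rw [e1, E.comm h2.le, ← map_add]
      congr 1
      simp [Q_apply]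
    · have h2' : t ≤ τ := not_lt.mp h2
      rw [Set.indicator_of_notMem (fun hm => h2 (Set.mem_Ico.mp hm).2)]
      simp only [G, if_neg h1, if_neg h2, ContinuousLinearMap.comp_apply,
        ContinuousLinearMap.neg_apply, map_neg]
      rw [E.shiftV hst h2']
      simp

lemma tendsto_U_diag (τ₀ : ℝ) (z : X) :
    Tendsto (fun τ => E.U (max τ τ₀) (min τ τ₀) z) (nhds τ₀) (nhds z) := by
  have hc : Continuous fun τ : ℝ => ((max τ τ₀, min τ τ₀) : ℝ × ℝ) :=
    (continuous_id.max continuous_const).prodMk (continuous_id.min continuous_const)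
  have hp : Tendsto (fun τ : ℝ => ((max τ τ₀, min τ τ₀) : ℝ × ℝ)) (nhds τ₀) (nhds (τ₀, τ₀)) := by
    simpa using hc.tendsto τ₀
  have h2 : Tendsto (fun τ : ℝ => ((max τ τ₀, min τ τ₀) : ℝ × ℝ)) (nhds τ₀)
      (nhdsWithin (τ₀, τ₀) {p : ℝ × ℝ | p.2 ≤ p.1}) :=
    tendsto_nhdsWithin_of_tendsto_nhds_of_eventually_within _ hp
      (Filter.Eventually.of_forall fun τ => show (min τ τ₀ : ℝ) ≤ max τ τ₀ from min_le_max)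
  have h3 := (E.U_cont z (τ₀, τ₀) (le_refl τ₀)).tendsto.comp h2
  simpa [E.U_id, Function.comp_def] using h3

lemma contB (f : ℝ → X) (hfc : Continuous f) (t : ℝ) :
    ContinuousOn (fun τ => E.V t τ (E.Q τ (f τ))) (Set.Ici t) := by
  intro τ₀ hτ₀
  set B := fun τ => E.V t τ (E.Q τ (f τ)) with hB
  have key : ∀ τ ∈ Set.Ici t, ‖B τ - B τ₀‖ ≤
      E.N * ‖f τ - f τ₀‖ + E.N * (E.N * ‖f τ₀ - E.U (max τ τ₀) (min τ τ₀) (f τ₀)‖) := by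
    intro τ hτ
    rcases le_total τ₀ τ with hle | hle
    · rw [max_eq_left hle, min_eq_right hle]
      calc ‖B τ - B τ₀‖ ≤ ‖E.V t τ (E.Q τ (f τ)) - E.V t τ (E.Q τ (f τ₀))‖
            + ‖E.V t τ (E.Q τ (f τ₀)) - E.V t τ₀ (E.Q τ₀ (f τ₀))‖ :=
          norm_sub_le_norm_sub_add_norm_sub _ _ _
        _ ≤ E.N * ‖f τ - f τ₀‖ + E.N * (E.N * ‖f τ₀ - E.U τ τ₀ (f τ₀)‖) :=
          add_le_add (E.normB_fst hτ _ _) (E.normB_shift hτ₀ hle _)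
    · rw [max_eq_right hle, min_eq_left hle, norm_sub_rev]
      calc ‖B τ₀ - B τ‖ ≤ ‖E.V t τ₀ (E.Q τ₀ (f τ₀)) - E.V t τ (E.Q τ (f τ₀))‖
            + ‖E.V t τ (E.Q τ (f τ₀)) - E.V t τ (E.Q τ (f τ))‖ :=
          norm_sub_le_norm_sub_add_norm_sub _ _ _
        _ ≤ E.N * (E.N * ‖f τ₀ - E.U τ₀ τ (f τ₀)‖) + E.N * ‖f τ₀ - f τ‖ :=
          add_le_add (E.normB_shift hτ hle _) (E.normB_fst hτ _ _)
        _ = E.N * ‖f τ - f τ₀‖ + E.N * (E.N * ‖f τ₀ - E.U τ₀ τ (f τ₀)‖) := by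
          rw [norm_sub_rev (f τ₀) (f τ)]; ring
  have t1 : Tendsto (fun τ => ‖f τ - f τ₀‖) (nhds τ₀) (nhds 0) := by
    have h0 : Continuous fun τ => ‖f τ - f τ₀‖ := (hfc.sub continuous_const).norm
    simpa using h0.tendsto τ₀
  have t2 : Tendsto (fun τ => ‖f τ₀ - E.U (max τ τ₀) (min τ τ₀) (f τ₀)‖) (nhds τ₀) (nhds 0) := by
    have h := tendsto_const_nhds (x := f τ₀) (f := (nhds τ₀ : Filter ℝ)) |>.sub (E.tendsto_U_diag τ₀ (f τ₀))
    simpa using h.norm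
  have hg : Tendsto (fun τ => E.N * ‖f τ - f τ₀‖
      + E.N * (E.N * ‖f τ₀ - E.U (max τ τ₀) (min τ τ₀) (f τ₀)‖)) (nhds τ₀) (nhds 0) := by
    have := (t1.const_mul E.N).add ((t2.const_mul E.N).const_mul E.N)
    simpa using this
  have hz : Tendsto (fun τ => B τ - B τ₀) (nhdsWithin τ₀ (Set.Ici t)) (nhds 0) := by
    apply squeeze_zero_norm'
    · filter_upwards [self_mem_nhdsWithin] with τ hτ using key τ hτ
    · exact hg.mono_left nhdsWithin_le_nhds
  have : Tendsto B (nhdsWithin τ₀ (Set.Ici t)) (nhds (B τ₀)) := by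
    have := hz.add (tendsto_const_nhds (x := B τ₀))
    simpa using this
  exact this

lemma contA (f : ℝ → X) (hfc : Continuous f) (t : ℝ) :
    ContinuousOn (fun τ => E.U t τ (E.P τ (f τ))) (Set.Iic t) := by
  intro τ₀ hτ₀
  set A := fun τ => E.U t τ (E.P τ (f τ)) with hA
  have key : ∀ τ ∈ Set.Iic t, ‖A τ - A τ₀‖ ≤
      E.N * ‖f τ - f τ₀‖ + E.N * ‖f τ₀ - E.U (max τ τ₀) (min τ τ₀) (f τ₀)‖ := by
    intro τ hτ
    rcases le_total τ₀ τ with hle | hle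
    · rw [max_eq_left hle, min_eq_right hle]
      calc ‖A τ - A τ₀‖ ≤ ‖E.U t τ (E.P τ (f τ)) - E.U t τ (E.P τ (f τ₀))‖
            + ‖E.U t τ (E.P τ (f τ₀)) - E.U t τ₀ (E.P τ₀ (f τ₀))‖ :=
          norm_sub_le_norm_sub_add_norm_sub _ _ _
        _ ≤ E.N * ‖f τ - f τ₀‖ + E.N * ‖f τ₀ - E.U τ τ₀ (f τ₀)‖ :=
          add_le_add (E.normA_fst hτ _ _) (E.normA_shift hle hτ _)
    · rw [max_eq_right hle, min_eq_left hle, norm_sub_rev]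
      calc ‖A τ₀ - A τ‖ ≤ ‖E.U t τ₀ (E.P τ₀ (f τ₀)) - E.U t τ (E.P τ (f τ₀))‖
            + ‖E.U t τ (E.P τ (f τ₀)) - E.U t τ (E.P τ (f τ))‖ :=
          norm_sub_le_norm_sub_add_norm_sub _ _ _
        _ ≤ E.N * ‖f τ₀ - E.U τ₀ τ (f τ₀)‖ + E.N * ‖f τ₀ - f τ‖ :=
          add_le_add (E.normA_shift hle hτ₀ _) (E.normA_fst (hτ.trans (le_refl t)) _ _)
        _ = E.N * ‖f τ - f τ₀‖ + E.N * ‖f τ₀ - E.U τ₀ τ (f τ₀)‖ := by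
          rw [norm_sub_rev (f τ₀) (f τ)]; ring
  have t1 : Tendsto (fun τ => ‖f τ - f τ₀‖) (nhds τ₀) (nhds 0) := by
    have h0 : Continuous fun τ => ‖f τ - f τ₀‖ := (hfc.sub continuous_const).norm
    simpa using h0.tendsto τ₀
  have t2 : Tendsto (fun τ => ‖f τ₀ - E.U (max τ τ₀) (min τ τ₀) (f τ₀)‖) (nhds τ₀) (nhds 0) := by
    have h := tendsto_const_nhds (x := f τ₀) (f := (nhds τ₀ : Filter ℝ)) |>.sub (E.tendsto_U_diag τ₀ (f τ₀))
    simpa using h.norm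
  have hg : Tendsto (fun τ => E.N * ‖f τ - f τ₀‖
      + E.N * ‖f τ₀ - E.U (max τ τ₀) (min τ τ₀) (f τ₀)‖) (nhds τ₀) (nhds 0) := by
    have := (t1.const_mul E.N).add (t2.const_mul E.N)
    simpa using this
  have hz : Tendsto (fun τ => A τ - A τ₀) (nhdsWithin τ₀ (Set.Iic t)) (nhds 0) := by
    apply squeeze_zero_norm'
    · filter_upwards [self_mem_nhdsWithin] with τ hτ using key τ hτ
    · exact hg.mono_left nhdsWithin_le_nhds
  have : Tendsto A (nhdsWithin τ₀ (Set.Iic t)) (nhds (A τ₀)) := by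
    have := hz.add (tendsto_const_nhds (x := A τ₀))
    simpa using this
  exact this

lemma integrable_green (f : ℝ → X) (hfc : Continuous f)
    (hfb : IsBounded (Set.range f)) (t : ℝ) :
    Integrable (fun τ => E.G t τ (f τ)) := by
  obtain ⟨C, hC⟩ := isBounded_iff_forall_norm_le.mp hfb
  have hCf : ∀ τ, ‖f τ‖ ≤ C := fun τ => hC _ (Set.mem_range_self τ)
  have hC0 : (0:ℝ) ≤ C := le_trans (norm_nonneg (f t)) (hCf t)
  rw [← integrableOn_univ, ← Set.Iio_union_Ici (a := t), integrableOn_union]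
  constructor
  · -- on Iio t
    have hgi : IntegrableOn (fun τ => E.N * C * Real.exp (E.β * (τ - t))) (Set.Iio t) := by
      have h1 : IntegrableOn (fun σ : ℝ => Real.exp (-E.β * σ)) (Set.Ioi (-t)) :=
        exp_neg_integrableOn_Ioi _ E.β_pos
      have h2 : IntegrableOn (fun σ : ℝ => E.N * C * Real.exp (E.β * (-σ - t)))
          (Set.Ioi (-t)) := by
        have h3 := h1.const_mul (E.N * C * Real.exp (-(E.β * t)))
        refine IntegrableOn.congr_fun h3 (fun σ _ => ?_) measurableSet_Ioi
        rw [mul_assoc, ← Real.exp_add]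
        exact congrArg (fun a => E.N * C * Real.exp a) (by ring)
      rw [← (Measure.measurePreserving_neg (volume : Measure ℝ)).integrableOn_comp_preimage
        (Homeomorph.neg ℝ).measurableEmbedding]
      simpa only [Function.comp_def, Set.neg_preimage, Set.neg_Iio, neg_neg] using h2
    have hae : AEStronglyMeasurable (fun τ => E.G t τ (f τ))
        (volume.restrict (Set.Iio t)) := by
      have hco : AEStronglyMeasurable (fun τ => E.U t τ (E.P τ (f τ)))
          (volume.restrict (Set.Iio t)) :=
        ((E.contA f hfc t).mono Set.Iio_subset_Iic_self).aestronglyMeasurable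
          measurableSet_Iio
      apply hco.congr
      filter_upwards [ae_restrict_mem measurableSet_Iio] with τ hτ
      have hτ' : τ < t := hτ
      simp only [G, if_pos hτ', ContinuousLinearMap.comp_apply]
      exact (E.comm (le_of_lt hτ') (f τ)).symm
    apply Integrable.mono' hgi hae
    filter_upwards [ae_restrict_mem measurableSet_Iio] with τ hτ
    have hτ' : τ < t := hτ
    have he : E.G t τ (f τ) = E.U t τ (E.P τ (f τ)) := by
      simp only [G, if_pos hτ', ContinuousLinearMap.comp_apply]
      exact E.comm hτ'.le (f τ)
    rw [he]
    calc ‖E.U t τ (E.P τ (f τ))‖ ≤ E.N * Real.exp (-E.β * (t - τ)) * ‖f τ‖ :=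
        E.P_decay hτ.le _
      _ ≤ E.N * C * Real.exp (E.β * (τ - t)) := by
          have he2 : -E.β * (t - τ) = E.β * (τ - t) := by ring
          rw [he2]
          calc E.N * Real.exp (E.β * (τ - t)) * ‖f τ‖
              ≤ E.N * Real.exp (E.β * (τ - t)) * C := by
                exact mul_le_mul_of_nonneg_left (hCf τ)
                  (mul_nonneg E.N_pos.le (Real.exp_pos _).le)
            _ = E.N * C * Real.exp (E.β * (τ - t)) := by ring
  · -- on Ici t
    have hgi : IntegrableOn (fun τ => E.N * C * Real.exp (-E.β * (τ - t))) (Set.Ici t) := by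
      rw [integrableOn_Ici_iff_integrableOn_Ioi]
      have h1 : IntegrableOn (fun σ : ℝ => Real.exp (-E.β * σ)) (Set.Ioi t) :=
        exp_neg_integrableOn_Ioi _ E.β_pos
      have h3 := h1.const_mul (E.N * C * Real.exp (E.β * t))
      refine IntegrableOn.congr_fun h3 (fun σ _ => ?_) measurableSet_Ioi
      rw [mul_assoc, ← Real.exp_add]
      exact congrArg (fun a => E.N * C * Real.exp a) (by ring)
    have hae : AEStronglyMeasurable (fun τ => E.G t τ (f τ))
        (volume.restrict (Set.Ici t)) := by
      have hco : AEStronglyMeasurable (fun τ => -(E.V t τ (E.Q τ (f τ))))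
          (volume.restrict (Set.Ici t)) :=
        ((E.contB f hfc t).neg).aestronglyMeasurable measurableSet_Ici
      apply hco.congr
      filter_upwards [ae_restrict_mem measurableSet_Ici] with τ hτ
      simp only [G, if_neg (not_lt.mpr (Set.mem_Ici.mp hτ)), ContinuousLinearMap.neg_apply,
        ContinuousLinearMap.comp_apply, Pi.neg_apply]
    apply Integrable.mono' hgi hae
    filter_upwards [ae_restrict_mem measurableSet_Ici] with τ hτ
    have he : E.G t τ (f τ) = -(E.V t τ (E.Q τ (f τ))) := by
      simp only [G, if_neg (not_lt.mpr (Set.mem_Ici.mp hτ)), ContinuousLinearMap.neg_apply,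
        ContinuousLinearMap.comp_apply]
    rw [he, norm_neg]
    calc ‖E.V t τ (E.Q τ (f τ))‖ ≤ E.N * Real.exp (-E.β * (τ - t)) * ‖f τ‖ :=
        E.Q_decayQ hτ _
      _ ≤ E.N * C * Real.exp (-E.β * (τ - t)) := by
          calc E.N * Real.exp (-E.β * (τ - t)) * ‖f τ‖
              ≤ E.N * Real.exp (-E.β * (τ - t)) * C := by
                exact mul_le_mul_of_nonneg_left (hCf τ)
                  (mul_nonneg E.N_pos.le (Real.exp_pos _).le)
            _ = E.N * C * Real.exp (-E.β * (τ - t)) := by ring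

end EvolutionDichotomy

/-- for bounded continuous `f`, the function
`u(t) = ∫_ℝ G(t,τ) f(τ) dτ` is a mild solution on the whole line:
`u(t) = U(t,s) u(s) + ∫_s^t U(t,τ) f(τ) dτ` for all `s ≤ t`. -/
theorem green_convolution_is_mild_solution
    {X : Type*} [NormedAddCommGroup X] [NormedSpace ℝ X] [CompleteSpace X]
    (E : EvolutionDichotomy X) (f : ℝ → X)
    (hfc : Continuous f) (hfb : Bornology.IsBounded (Set.range f)) :
    ∀ s t : ℝ, s ≤ t →
      (∫ τ : ℝ, E.G t τ (f τ)) =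
        E.U t s (∫ τ : ℝ, E.G s τ (f τ)) + ∫ τ in s..t, E.U t τ (f τ) := by
  intro s t hst
  have hs := E.integrable_green f hfc hfb s
  have ht := E.integrable_green f hfc hfb t
  have hcomp : Integrable (fun τ => E.U t s (E.G s τ (f τ))) :=
    (E.U t s).integrable_comp hs
  have hUs : E.U t s (∫ τ : ℝ, E.G s τ (f τ)) = ∫ τ : ℝ, E.U t s (E.G s τ (f τ)) :=
    (ContinuousLinearMap.integral_comp_comm _ hs).symm
  have key : (∫ τ : ℝ, (E.G t τ (f τ) - E.U t s (E.G s τ (f τ))))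
      = ∫ τ in s..t, E.U t τ (f τ) := by
    have hfun : (fun τ => E.G t τ (f τ) - E.U t s (E.G s τ (f τ)))
        = fun τ => (Set.Ico s t).indicator (fun r => E.U t r (f r)) τ := by
      funext τ
      rw [E.green_diff hst τ (f τ)]
      by_cases hτ : τ ∈ Set.Ico s t
      · rw [Set.indicator_of_mem hτ, Set.indicator_of_mem hτ]
      · rw [Set.indicator_of_notMem hτ, Set.indicator_of_notMem hτ]
    rw [hfun]
    rw [MeasureTheory.integral_indicator measurableSet_Ico]
    rw [show (∫ τ in Set.Ico s t, E.U t τ (f τ)) = ∫ τ in Set.Ioc s t, E.U t τ (f τ) from by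
      rw [MeasureTheory.Measure.restrict_congr_set MeasureTheory.Ico_ae_eq_Ioc]]
    rw [intervalIntegral.integral_of_le hst]
  rw [MeasureTheory.integral_sub ht hcomp] at key
  rw [hUs, ← key]
  abel
end

section
/- Assume the Green function G is exponentially almost periodic. If f : ℝ → X is almost periodic, then the function u(t) := ∫_ℝ G(t,s) f(s) ds is almost periodic. -/
open MeasureTheory Real Filter Bornology

section Aux

open Set

private lemma mul_exp_le {N e x : ℝ} (hN : 0 < N) (he : e ≤ 1) (hx : 0 ≤ x) :
    N * e * x ≤ N * x := by nlinarith [mul_nonneg hN.le hx]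

namespace EvolutionDichotomy

variable {X : Type*} [NormedAddCommGroup X] [NormedSpace ℝ X] (E : EvolutionDichotomy X)

lemma G_lt {t s : ℝ} (h : s < t) (x : X) : E.G t s x = E.U t s (E.P s x) := by
  simp only [G, if_pos h, ContinuousLinearMap.comp_apply]
  exact E.comm h.le x

lemma G_ge {t s : ℝ} (h : t ≤ s) (x : X) : E.G t s x = -E.V t s (x - E.P s x) := by
  simp only [G, if_neg (not_lt.mpr h), ContinuousLinearMap.neg_apply,
    ContinuousLinearMap.comp_apply, Q, ContinuousLinearMap.sub_apply,
    ContinuousLinearMap.id_apply]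

lemma G_norm (t s : ℝ) (x : X) : ‖E.G t s x‖ ≤ E.N * Real.exp (-E.β * |t - s|) * ‖x‖ := by
  rcases lt_or_ge s t with h | h
  · rw [E.G_lt h, abs_of_nonneg (sub_nonneg.mpr h.le)]
    exact E.P_decay h.le x
  · rw [E.G_ge h, norm_neg, abs_sub_comm, abs_of_nonneg (sub_nonneg.mpr h)]
    exact E.Q_decay h x

lemma exp_fac_le_one (t s : ℝ) : Real.exp (-E.β * |t - s|) ≤ 1 := by
  rw [← Real.exp_zero]
  apply Real.exp_le_exp.mpr
  have := abs_nonneg (t - s)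
  nlinarith [E.β_pos]

lemma G_norm' (t s : ℝ) (x : X) : ‖E.G t s x‖ ≤ E.N * ‖x‖ := by
  refine (E.G_norm t s x).trans ?_
  exact mul_exp_le E.N_pos (E.exp_fac_le_one t s) (norm_nonneg x)

lemma unique0 {t s : ℝ} (h : t ≤ s) {d : X} (hP : E.P t d = 0) (hU : E.U s t d = 0) :
    d = 0 := by
  have h1 := E.V_left h d
  rw [hP, sub_zero, hU, map_zero] at h1
  exact h1.symm

lemma norm_ker_le {t s : ℝ} (h : t ≤ s) {d : X} (hP : E.P t d = 0) :
    ‖d‖ ≤ E.N * Real.exp (-E.β * (s - t)) * ‖E.U s t d‖ := by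
  have hPs : E.P s (E.U s t d) = 0 := by rw [E.comm h d, hP, map_zero]
  have hd : E.V t s (E.U s t d) = d := by
    have h1 := E.V_left h d
    rwa [hP, sub_zero] at h1
  have hb := E.Q_decay h (E.U s t d)
  rw [hPs, sub_zero, hd] at hb
  exact hb

lemma exists_U_bound [CompleteSpace X] (a b : ℝ) :
    ∃ M : ℝ, 0 ≤ M ∧ ∀ ⦃s t : ℝ⦄, a ≤ s → s ≤ t → t ≤ b → ‖E.U t s‖ ≤ M := by
  set K : Set (ℝ × ℝ) := (Icc a b ×ˢ Icc a b) ∩ {p : ℝ × ℝ | p.2 ≤ p.1} with hK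
  have hKc : IsCompact K :=
    (isCompact_Icc.prod isCompact_Icc).inter_right (isClosed_le continuous_snd continuous_fst)
  have hpt : ∀ x : X, ∃ C, ∀ p : K, ‖E.U (p : ℝ × ℝ).1 (p : ℝ × ℝ).2 x‖ ≤ C := by
    intro x
    obtain ⟨C, hC⟩ := hKc.exists_bound_of_continuousOn ((E.U_cont x).mono inter_subset_right)
    exact ⟨C, fun p => hC _ p.2⟩
  obtain ⟨C', hC'⟩ := banach_steinhaus (g := fun p : K => E.U (p : ℝ × ℝ).1 (p : ℝ × ℝ).2) hpt
  refine ⟨max C' 0, le_max_right _ _, fun s t hs hst htb => ?_⟩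
  have hmem : ((t, s) : ℝ × ℝ) ∈ K := ⟨⟨⟨hs.trans hst, htb⟩, ⟨hs, hst.trans htb⟩⟩, hst⟩
  exact le_trans (hC' ⟨(t, s), hmem⟩) (le_max_left _ _)

end EvolutionDichotomy

end Aux
section Aux2

open Set

namespace EvolutionDichotomy

variable {X : Type*} [NormedAddCommGroup X] [NormedSpace ℝ X] (E : EvolutionDichotomy X)

lemma tendsto_U {α : Type*} {l : Filter α} {φ ψ : α → ℝ} {t₀ s₀ : ℝ} (h : s₀ ≤ t₀)
    (hφ : Filter.Tendsto φ l (nhds t₀)) (hψ : Filter.Tendsto ψ l (nhds s₀))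
    (hle : ∀ᶠ r in l, ψ r ≤ φ r) (x : X) :
    Filter.Tendsto (fun r => E.U (φ r) (ψ r) x) l (nhds (E.U t₀ s₀ x)) := by
  have hc := (E.U_cont x) (t₀, s₀) h
  have h' : Filter.Tendsto (fun r => (φ r, ψ r)) l
      (nhdsWithin (t₀, s₀) {p : ℝ × ℝ | p.2 ≤ p.1}) := by
    rw [tendsto_nhdsWithin_iff]
    exact ⟨hφ.prodMk_nhds hψ, hle⟩
  have hc' : Filter.Tendsto (fun p : ℝ × ℝ => E.U p.1 p.2 x)
      (nhdsWithin (t₀, s₀) {p : ℝ × ℝ | p.2 ≤ p.1}) (nhds (E.U t₀ s₀ x)) := hc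
  exact hc'.comp h'

lemma tendsto_P {α : Type*} {l : Filter α} {τ : α → ℝ} {y : α → X} {t₀ : ℝ} {y₀ : X}
    (hτ : Filter.Tendsto τ l (nhds t₀)) (hy : Filter.Tendsto y l (nhds y₀)) :
    Filter.Tendsto (fun r => E.P (τ r) (y r)) l (nhds (E.P t₀ y₀)) := by
  rw [← tendsto_sub_nhds_zero_iff]
  have hb : ∀ r, ‖E.P (τ r) (y r) - E.P t₀ y₀‖ ≤
      E.H * ‖y r - y₀‖ + ‖E.P (τ r) y₀ - E.P t₀ y₀‖ := by
    intro r
    have hsplit : E.P (τ r) (y r) - E.P t₀ y₀ =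
        E.P (τ r) (y r - y₀) + (E.P (τ r) y₀ - E.P t₀ y₀) := by
      rw [map_sub]; abel
    rw [hsplit]
    refine (norm_add_le _ _).trans (add_le_add_left ?_ _)
    calc ‖E.P (τ r) (y r - y₀)‖ ≤ ‖E.P (τ r)‖ * ‖y r - y₀‖ := (E.P (τ r)).le_opNorm _
    _ ≤ E.H * ‖y r - y₀‖ := mul_le_mul_of_nonneg_right (E.P_bound _) (norm_nonneg _)
  have hy0 : Filter.Tendsto (fun r => ‖y r - y₀‖) l (nhds 0) := by
    rw [← tendsto_sub_nhds_zero_iff] at hy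
    simpa using hy.norm
  have hp0 : Filter.Tendsto (fun r => ‖E.P (τ r) y₀ - E.P t₀ y₀‖) l (nhds 0) := by
    have h1 := ((E.P_cont y₀).tendsto t₀).comp hτ
    rw [← tendsto_sub_nhds_zero_iff] at h1
    simpa [Function.comp] using h1.norm
  have hlim : Filter.Tendsto
      (fun r => E.H * ‖y r - y₀‖ + ‖E.P (τ r) y₀ - E.P t₀ y₀‖) l (nhds 0) := by
    simpa using (hy0.const_mul E.H).add hp0
  exact squeeze_zero_norm hb hlim

lemma tendsto_U' [CompleteSpace X] {α : Type*} {l : Filter α} {φ ψ : α → ℝ} {y : α → X}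
    {t₀ s₀ : ℝ} {y₀ : X} (h : s₀ ≤ t₀)
    (hφ : Filter.Tendsto φ l (nhds t₀)) (hψ : Filter.Tendsto ψ l (nhds s₀))
    (hy : Filter.Tendsto y l (nhds y₀)) (hle : ∀ᶠ r in l, ψ r ≤ φ r) :
    Filter.Tendsto (fun r => E.U (φ r) (ψ r) (y r)) l (nhds (E.U t₀ s₀ y₀)) := by
  obtain ⟨M, hM0, hM⟩ := E.exists_U_bound (s₀ - 1) (t₀ + 1)
  rw [← tendsto_sub_nhds_zero_iff]
  have hev : ∀ᶠ r in l, ‖E.U (φ r) (ψ r) (y r) - E.U t₀ s₀ y₀‖ ≤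
      M * ‖y r - y₀‖ + ‖E.U (φ r) (ψ r) y₀ - E.U t₀ s₀ y₀‖ := by
    have h1 : ∀ᶠ r in l, s₀ - 1 ≤ ψ r := hψ.eventually (eventually_ge_nhds (by linarith))
    have h2 : ∀ᶠ r in l, φ r ≤ t₀ + 1 := hφ.eventually (eventually_le_nhds (by linarith))
    filter_upwards [h1, h2, hle] with r hr1 hr2 hr3
    have hnorm : ‖E.U (φ r) (ψ r)‖ ≤ M := hM hr1 hr3 hr2
    have hsplit : E.U (φ r) (ψ r) (y r) - E.U t₀ s₀ y₀ =
        E.U (φ r) (ψ r) (y r - y₀) + (E.U (φ r) (ψ r) y₀ - E.U t₀ s₀ y₀) := by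
      rw [map_sub]; abel
    rw [hsplit]
    refine (norm_add_le _ _).trans (add_le_add_left ?_ _)
    exact le_trans ((E.U _ _).le_opNorm _) (mul_le_mul_of_nonneg_right hnorm (norm_nonneg _))
  have hy0 : Filter.Tendsto (fun r => ‖y r - y₀‖) l (nhds 0) := by
    rw [← tendsto_sub_nhds_zero_iff] at hy
    simpa using hy.norm
  have hu0 : Filter.Tendsto (fun r => ‖E.U (φ r) (ψ r) y₀ - E.U t₀ s₀ y₀‖) l (nhds 0) := by
    have h1 := E.tendsto_U h hφ hψ hle y₀
    rw [← tendsto_sub_nhds_zero_iff] at h1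
    simpa using h1.norm
  exact squeeze_zero_norm' hev (by simpa using (hy0.const_mul M).add hu0)

lemma tendsto_V_id {t₀ : ℝ} {z₀ : X} (hz : E.P t₀ z₀ = 0) :
    Filter.Tendsto (fun t => E.V t t₀ z₀) (nhdsWithin t₀ (Iic t₀)) (nhds z₀) := by
  rw [← tendsto_sub_nhds_zero_iff]
  have key : ∀ t, t ≤ t₀ → ‖E.V t t₀ z₀ - z₀‖ ≤
      (1 + E.N * E.N) * ‖E.P t z₀‖ + E.N * ‖z₀ - E.U t₀ t z₀‖ := by
    intro t ht
    set w := E.V t t₀ z₀ - z₀ with hw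
    have hVm : E.P t (E.V t t₀ z₀) = 0 := by
      have h1 := E.V_mapsTo ht z₀; rwa [hz, sub_zero] at h1
    have hPw : E.P t w = -E.P t z₀ := by rw [hw, map_sub, hVm, zero_sub]
    set q := w - E.P t w with hq
    have hPq : E.P t q = 0 := by rw [hq, map_sub, E.P_proj, sub_self]
    have hqle : ‖q‖ ≤ E.N * ‖E.U t₀ t q‖ := by
      refine (E.norm_ker_le ht hPq).trans ?_
      refine mul_exp_le E.N_pos ?_ (norm_nonneg _)
      rw [← Real.exp_zero]; apply Real.exp_le_exp.mpr; nlinarith [E.β_pos]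
    have hVr : E.U t₀ t (E.V t t₀ z₀) = z₀ := by
      have h1 := E.V_right ht z₀
      rw [hz, sub_zero] at h1
      exact h1
    have hqeq : q = E.V t t₀ z₀ - z₀ + E.P t z₀ := by rw [hq, hPw, hw]; abel
    have hUq : E.U t₀ t q = (z₀ - E.U t₀ t z₀) + E.U t₀ t (E.P t z₀) := by
      rw [hqeq, map_add, map_sub, hVr]
    have hUPz : ‖E.U t₀ t (E.P t z₀)‖ ≤ E.N * ‖E.P t z₀‖ := by
      have h2 := E.P_decay ht (E.P t z₀)
      rw [E.P_proj] at h2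
      refine h2.trans ?_
      refine mul_exp_le E.N_pos ?_ (norm_nonneg _)
      rw [← Real.exp_zero]; apply Real.exp_le_exp.mpr; nlinarith [E.β_pos]
    have h3 : ‖E.U t₀ t q‖ ≤ ‖z₀ - E.U t₀ t z₀‖ + E.N * ‖E.P t z₀‖ := by
      rw [hUq]
      exact (norm_add_le _ _).trans (add_le_add_right hUPz _)
    have h4 : ‖w‖ ≤ ‖E.P t w‖ + ‖q‖ := by
      calc ‖w‖ = ‖E.P t w + q‖ := by rw [hq]; congr 1; abel
      _ ≤ _ := norm_add_le _ _
    have h5 : ‖E.P t w‖ = ‖E.P t z₀‖ := by rw [hPw, norm_neg]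
    nlinarith [mul_le_mul_of_nonneg_left h3 E.N_pos.le]
  have hP0 : Filter.Tendsto (fun t => ‖E.P t z₀‖) (nhdsWithin t₀ (Iic t₀)) (nhds 0) := by
    have h1 : Filter.Tendsto (fun t => E.P t z₀) (nhdsWithin t₀ (Iic t₀))
        (nhds (E.P t₀ z₀)) := ((E.P_cont z₀).tendsto t₀).mono_left nhdsWithin_le_nhds
    rw [hz] at h1
    simpa using h1.norm
  have hU : Filter.Tendsto (fun t => E.U t₀ t z₀) (nhdsWithin t₀ (Iic t₀)) (nhds z₀) := by
    have h0 := E.tendsto_U (le_refl t₀) tendsto_const_nhds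
      (tendsto_id.mono_left nhdsWithin_le_nhds) eventually_mem_nhdsWithin z₀
    rwa [E.U_id, ContinuousLinearMap.id_apply] at h0
  have hU0 : Filter.Tendsto (fun t => ‖z₀ - E.U t₀ t z₀‖) (nhdsWithin t₀ (Iic t₀)) (nhds 0) := by
    have h1 : Filter.Tendsto (fun t => z₀ - E.U t₀ t z₀) (nhdsWithin t₀ (Iic t₀))
        (nhds (z₀ - z₀)) := tendsto_const_nhds.sub hU
    rw [sub_self] at h1
    simpa using h1.norm
  refine squeeze_zero_norm' ?_ (by simpa using (hP0.const_mul (1 + E.N * E.N)).add (hU0.const_mul E.N))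
  filter_upwards [eventually_mem_nhdsWithin] with t ht
  exact key t ht

end EvolutionDichotomy

end Aux2
section Aux3

open Set

namespace EvolutionDichotomy

variable {X : Type*} [NormedAddCommGroup X] [NormedSpace ℝ X] (E : EvolutionDichotomy X)

lemma V_transport_left {t t₀ s : ℝ} (h1 : t ≤ t₀) (h2 : t₀ ≤ s) (x : X) :
    E.V t s (x - E.P s x) = E.V t t₀ (E.V t₀ s (x - E.P s x)) := by
  set z := E.V t s (x - E.P s x) with hzdef
  set z₀ := E.V t₀ s (x - E.P s x) with hz0def
  have hts : t ≤ s := h1.trans h2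
  have hPz : E.P t z = 0 := E.V_mapsTo hts x
  have hPz₀ : E.P t₀ z₀ = 0 := E.V_mapsTo h2 x
  have hUz : E.U s t z = x - E.P s x := E.V_right hts x
  have hUz₀ : E.U s t₀ z₀ = x - E.P s x := E.V_right h2 x
  have hkey : E.U t₀ t z = z₀ := by
    have hd1 : E.P t₀ (E.U t₀ t z - z₀) = 0 := by
      rw [map_sub, hPz₀, sub_zero, E.comm h1 z, hPz, map_zero]
    have hd2 : E.U s t₀ (E.U t₀ t z - z₀) = 0 := by
      rw [map_sub, E.U_comp h1 h2 z, hUz, hUz₀, sub_self]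
    exact sub_eq_zero.mp (E.unique0 h2 hd1 hd2)
  have h3 := E.V_left h1 z
  rw [hPz, sub_zero, hkey] at h3
  exact h3.symm

lemma V_transport_right {t₀ t s : ℝ} (h1 : t₀ ≤ t) (h2 : t ≤ s) (x : X) :
    E.V t s (x - E.P s x) = E.U t t₀ (E.V t₀ s (x - E.P s x)) := by
  set z := E.V t s (x - E.P s x) with hzdef
  set z₀ := E.V t₀ s (x - E.P s x) with hz0def
  have hts : t₀ ≤ s := h1.trans h2
  have hPz : E.P t z = 0 := E.V_mapsTo h2 x
  have hPz₀ : E.P t₀ z₀ = 0 := E.V_mapsTo hts x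
  have hUz : E.U s t z = x - E.P s x := E.V_right h2 x
  have hUz₀ : E.U s t₀ z₀ = x - E.P s x := E.V_right hts x
  have hd1 : E.P t (E.U t t₀ z₀ - z) = 0 := by
    rw [map_sub, hPz, sub_zero, E.comm h1 z₀, hPz₀, map_zero]
  have hd2 : E.U s t (E.U t t₀ z₀ - z) = 0 := by
    rw [map_sub, E.U_comp h1 h2 z₀, hUz₀, hUz, sub_self]
  exact (sub_eq_zero.mp (E.unique0 h2 hd1 hd2)).symm

lemma tendsto_V_fst {s t₀ : ℝ} (ht : t₀ < s) (x : X) :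
    Filter.Tendsto (fun t => E.V t s (x - E.P s x)) (nhds t₀)
      (nhds (E.V t₀ s (x - E.P s x))) := by
  set z₀ := E.V t₀ s (x - E.P s x) with hz0
  rw [← nhdsLE_sup_nhdsGE t₀, Filter.tendsto_sup]
  constructor
  · have hPz₀ : E.P t₀ z₀ = 0 := E.V_mapsTo ht.le x
    refine (E.tendsto_V_id hPz₀).congr' ?_
    filter_upwards [eventually_mem_nhdsWithin] with t htt
    exact (E.V_transport_left htt ht.le x).symm
  · have hU : Filter.Tendsto (fun t => E.U t t₀ z₀) (nhdsWithin t₀ (Ici t₀)) (nhds z₀) := by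
      have h0 := E.tendsto_U (le_refl t₀) (tendsto_id.mono_left nhdsWithin_le_nhds)
        tendsto_const_nhds eventually_mem_nhdsWithin z₀
      rwa [E.U_id, ContinuousLinearMap.id_apply] at h0
    refine hU.congr' ?_
    have hsmem : Iic s ∈ nhdsWithin t₀ (Ici t₀) := nhdsWithin_le_nhds (Iic_mem_nhds ht)
    filter_upwards [eventually_mem_nhdsWithin, hsmem] with t ha hb
    exact (E.V_transport_right ha hb x).symm

lemma tendsto_V_snd [CompleteSpace X] {t s₀ : ℝ} (h : t ≤ s₀) (x : X) :
    Filter.Tendsto (fun s => E.V t s (x - E.P s x)) (nhdsWithin s₀ (Ici t))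
      (nhds (E.V t s₀ (x - E.P s₀ x))) := by
  set s' := s₀ + 1 with hs'
  have hts' : t ≤ s' := by rw [hs']; linarith
  have key : ∀ s, t ≤ s → s ≤ s' →
      ‖E.V t s (x - E.P s x) - E.V t s₀ (x - E.P s₀ x)‖ ≤
        E.N * ‖E.U s' s (x - E.P s x) - E.U s' s₀ (x - E.P s₀ x)‖ := by
    intro s hts hss'
    have hPz : E.P t (E.V t s (x - E.P s x)) = 0 := E.V_mapsTo hts x
    have hPz₀ : E.P t (E.V t s₀ (x - E.P s₀ x)) = 0 := E.V_mapsTo h x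
    have hPw : E.P t (E.V t s (x - E.P s x) - E.V t s₀ (x - E.P s₀ x)) = 0 := by
      rw [map_sub, hPz, hPz₀, sub_zero]
    have hUzs : E.U s' t (E.V t s (x - E.P s x)) = E.U s' s (x - E.P s x) := by
      rw [← E.U_comp hts hss' (E.V t s (x - E.P s x)), E.V_right hts x]
    have hUzs₀ : E.U s' t (E.V t s₀ (x - E.P s₀ x)) = E.U s' s₀ (x - E.P s₀ x) := by
      rw [← E.U_comp h (by rw [hs']; linarith) (E.V t s₀ (x - E.P s₀ x)), E.V_right h x]
    have hb := E.norm_ker_le hts' hPw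
    have hUd : E.U s' t (E.V t s (x - E.P s x) - E.V t s₀ (x - E.P s₀ x)) =
        E.U s' s (x - E.P s x) - E.U s' s₀ (x - E.P s₀ x) := by
      rw [(E.U s' t).map_sub, hUzs, hUzs₀]
    rw [hUd] at hb
    refine hb.trans ?_
    refine mul_exp_le E.N_pos ?_ (norm_nonneg _)
    rw [← Real.exp_zero]; apply Real.exp_le_exp.mpr; nlinarith [E.β_pos]
  rw [← tendsto_sub_nhds_zero_iff]
  have hUten : Filter.Tendsto (fun s => E.U s' s (x - E.P s x)) (nhdsWithin s₀ (Ici t))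
      (nhds (E.U s' s₀ (x - E.P s₀ x))) := by
    refine E.tendsto_U' (by rw [hs']; linarith) tendsto_const_nhds
      (tendsto_id.mono_left nhdsWithin_le_nhds)
      (((continuous_const.sub (E.P_cont x)).tendsto s₀).mono_left nhdsWithin_le_nhds) ?_
    exact (tendsto_id.mono_left nhdsWithin_le_nhds).eventually
      (eventually_le_nhds (by rw [hs']; linarith))
  have hRHS : Filter.Tendsto
      (fun s => E.N * ‖E.U s' s (x - E.P s x) - E.U s' s₀ (x - E.P s₀ x)‖)
      (nhdsWithin s₀ (Ici t)) (nhds 0) := by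
    rw [← tendsto_sub_nhds_zero_iff] at hUten
    simpa using hUten.norm.const_mul E.N
  refine squeeze_zero_norm' ?_ hRHS
  have hsmem : Iic s' ∈ nhdsWithin s₀ (Ici t) :=
    nhdsWithin_le_nhds (Iic_mem_nhds (by rw [hs']; linarith))
  filter_upwards [eventually_mem_nhdsWithin, hsmem] with s h1 h2
  exact key s h1 h2

end EvolutionDichotomy

end Aux3
section ExpAbs

open Set MeasureTheory

private lemma expabs_Ioi {c : ℝ} (hc : 0 < c) :
    IntegrableOn (fun s : ℝ => Real.exp (-c * s)) (Ioi 0) ∧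
      ∫ s in Ioi (0:ℝ), Real.exp (-c * s) = 1 / c := by
  have hint := exp_neg_integrableOn_Ioi 0 hc
  refine ⟨hint, ?_⟩
  have hderiv : ∀ x ∈ Ici (0:ℝ),
      HasDerivAt (fun s => -Real.exp (-c * s) / c) (Real.exp (-c * x)) x := by
    intro x _
    have h1 : HasDerivAt (fun s : ℝ => -c * s) (-c) x := by
      simpa using (hasDerivAt_id x).const_mul (-c)
    have h2 := h1.exp.neg.div_const c
    refine h2.congr_deriv ?_
    field_simp
  have htend : Filter.Tendsto (fun s => -Real.exp (-c * s) / c) Filter.atTop (nhds 0) := by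
    have h3 : Filter.Tendsto (fun s : ℝ => Real.exp (-c * s)) Filter.atTop (nhds 0) := by
      have h4 : Filter.Tendsto (fun s : ℝ => c * s) Filter.atTop Filter.atTop :=
        Filter.Tendsto.const_mul_atTop hc tendsto_id
      have h5 := Real.tendsto_exp_neg_atTop_nhds_zero.comp h4
      rw [show (fun s : ℝ => Real.exp (-c * s)) = (fun x => Real.exp (-x)) ∘ fun s => c * s
        from by funext s; simp [neg_mul]]
      exact h5
    simpa using h3.neg.div_const c
  have hres := integral_Ioi_of_hasDerivAt_of_tendsto' hderiv hint htend
  rw [hres]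
  norm_num
  field_simp

lemma integrable_exp_abs {c : ℝ} (hc : 0 < c) (t : ℝ) :
    Integrable (fun s : ℝ => Real.exp (-c * |s - t|)) ∧
      ∫ s : ℝ, Real.exp (-c * |s - t|) = 2 / c := by
  obtain ⟨hint0, hval0⟩ := expabs_Ioi hc
  set f : ℝ → ℝ := fun s => Real.exp (-c * |s|) with hfdef
  have hIoi : IntegrableOn f (Ioi 0) := by
    refine hint0.congr_fun (fun s hs => ?_) measurableSet_Ioi
    simp [hfdef, abs_of_pos (show (0:ℝ) < s from hs)]
  have hIci : IntegrableOn f (Ici 0) := by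
    rw [integrableOn_Ici_iff_integrableOn_Ioi]
    exact hIoi
  set g : ℝ → ℝ := Set.indicator (Ici 0) f with hgdef
  have hg : Integrable g := hIci.integrable_indicator measurableSet_Ici
  have hgneg : Integrable (fun s => g (-s)) := hg.comp_neg
  have hae : (fun s => g s + g (-s)) =ᵐ[volume] f := by
    have h0 : ∀ᵐ s : ℝ ∂volume, s ≠ 0 := by
      have hset : {s : ℝ | ¬ s ≠ 0} = {0} := by ext s; simp
      rw [MeasureTheory.ae_iff, hset]
      exact measure_singleton 0
    filter_upwards [h0] with s hs
    rcases lt_or_gt_of_ne hs with h | h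
    · have : ¬ (0:ℝ) ≤ s := not_le.mpr h
      simp [hgdef, Set.indicator, this, (by linarith : (0:ℝ) ≤ -s), hfdef, abs_neg]
    · have h1 : (0:ℝ) ≤ s := h.le
      have h2 : ¬ (0:ℝ) ≤ -s := by simp; linarith
      simp [hgdef, Set.indicator, h1, h2]
  have hfInt : Integrable f := (hg.add hgneg).congr hae
  have hgval : ∫ s, g s = 1 / c := by
    have h3 : ∫ s, g s = ∫ s in Ici (0:ℝ), f s := integral_indicator measurableSet_Ici
    rw [h3, integral_Ici_eq_integral_Ioi, ← hval0]
    refine setIntegral_congr_fun measurableSet_Ioi (fun s hs => ?_)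
    simp [hfdef, abs_of_pos (show (0:ℝ) < s from hs)]
  have hval : ∫ s, f s = 2 / c := by
    have h1 : ∫ s, f s = ∫ s, (g s + g (-s)) := (integral_congr_ae hae).symm
    rw [h1, integral_add hg hgneg]
    have h2 : ∫ s, g (-s) = ∫ s, g s := integral_neg_eq_self g volume
    rw [h2, hgval]
    ring
  constructor
  · exact hfInt.comp_sub_right t
  · calc ∫ s, Real.exp (-c * |s - t|) = ∫ s, f (s - t) := rfl
    _ = ∫ s, f s := integral_sub_right_eq_self f t
    _ = 2 / c := hval

end ExpAbs
section Aux5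

open Set MeasureTheory

private lemma bound_helper1 {N e C v : ℝ} (hN : 0 < N) (he : 0 < e) (hv : 0 ≤ v)
    (hvC : v ≤ C) : N * e * v ≤ N * C * e := by nlinarith [mul_pos hN he]

private lemma bound_helper2 {N e e' C v : ℝ} (hN : 0 < N) (he : 0 < e)
    (hee' : e ≤ e') (hv : 0 ≤ v) (hvC : v ≤ C) : N * e * v ≤ N * e' * C := by
  nlinarith [mul_pos hN he, mul_nonneg hN.le (hv.trans hvC)]

namespace EvolutionDichotomy

variable {X : Type*} [NormedAddCommGroup X] [NormedSpace ℝ X] (E : EvolutionDichotomy X)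
variable {f : ℝ → X}

lemma contOn_Ici [CompleteSpace X] (hfc : Continuous f) (t : ℝ) :
    ContinuousOn (fun s => E.G t s (f s)) (Ici t) := by
  intro s₀ hs₀
  have hts₀ : t ≤ s₀ := hs₀
  unfold ContinuousWithinAt
  set x₀ := f s₀ with hx₀
  have h2 : Filter.Tendsto (fun s => E.G t s x₀) (nhdsWithin s₀ (Ici t))
      (nhds (E.G t s₀ x₀)) := by
    have h3 := (E.tendsto_V_snd hts₀ x₀).neg
    rw [← E.G_ge hts₀] at h3
    refine h3.congr' ?_
    filter_upwards [eventually_mem_nhdsWithin] with s hs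
    exact (E.G_ge hs x₀).symm
  have h1 : Filter.Tendsto (fun s => E.G t s (f s - x₀)) (nhdsWithin s₀ (Ici t)) (nhds 0) := by
    refine squeeze_zero_norm (fun s => E.G_norm' t s (f s - x₀)) ?_
    have h4 : Filter.Tendsto (fun s => ‖f s - x₀‖) (nhdsWithin s₀ (Ici t)) (nhds 0) := by
      have h5 : Filter.Tendsto f (nhdsWithin s₀ (Ici t)) (nhds x₀) :=
        (hfc.tendsto s₀).mono_left nhdsWithin_le_nhds
      rw [← tendsto_sub_nhds_zero_iff] at h5
      simpa using h5.norm
    simpa using h4.const_mul E.N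
  rw [← tendsto_sub_nhds_zero_iff] at h2 ⊢
  have hsum := h1.add h2
  rw [add_zero] at hsum
  refine hsum.congr (fun s => ?_)
  rw [map_sub]
  abel

lemma contOn_Iio [CompleteSpace X] (hfc : Continuous f) (t : ℝ) :
    ContinuousOn (fun s => E.G t s (f s)) (Iio t) := by
  intro s₀ hs₀
  unfold ContinuousWithinAt
  have hU : Filter.Tendsto (fun s => E.U t s (E.P s (f s))) (nhdsWithin s₀ (Iio t))
      (nhds (E.U t s₀ (E.P s₀ (f s₀)))) := by
    refine E.tendsto_U' (le_of_lt hs₀) tendsto_const_nhds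
      (tendsto_id.mono_left nhdsWithin_le_nhds)
      ((E.tendsto_P tendsto_id (hfc.tendsto s₀)).mono_left nhdsWithin_le_nhds) ?_
    filter_upwards [eventually_mem_nhdsWithin] with s hs
    exact le_of_lt hs
  rw [← E.G_lt hs₀] at hU
  refine hU.congr' ?_
  filter_upwards [eventually_mem_nhdsWithin] with s hs
  exact (E.G_lt hs (f s)).symm

lemma aesm_integrand [CompleteSpace X] (hfc : Continuous f) (t : ℝ) :
    AEStronglyMeasurable (fun s => E.G t s (f s)) volume := by
  have m1 : AEStronglyMeasurable (fun s => E.G t s (f s)) (volume.restrict (Iio t)) :=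
    (E.contOn_Iio hfc t).aestronglyMeasurable measurableSet_Iio
  have m2 : AEStronglyMeasurable (fun s => E.G t s (f s)) (volume.restrict (Ici t)) :=
    (E.contOn_Ici hfc t).aestronglyMeasurable measurableSet_Ici
  have hsplit := Measure.restrict_add_restrict_compl (μ := volume) (measurableSet_Iio (a := t))
  rw [compl_Iio] at hsplit
  rw [← hsplit]
  exact m1.add_measure m2

lemma integrable_integrand [CompleteSpace X] (hfc : Continuous f) {C : ℝ}
    (hC : ∀ s, ‖f s‖ ≤ C) (t : ℝ) :
    Integrable (fun s => E.G t s (f s)) := by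
  have hb := (integrable_exp_abs E.β_pos t).1
  refine Integrable.mono' (hb.const_mul (E.N * C)) (E.aesm_integrand hfc t) ?_
  refine Filter.Eventually.of_forall (fun s => ?_)
  calc ‖E.G t s (f s)‖ ≤ E.N * Real.exp (-E.β * |t - s|) * ‖f s‖ := E.G_norm t s (f s)
  _ ≤ E.N * C * Real.exp (-E.β * |s - t|) := by
      rw [abs_sub_comm t s]
      exact bound_helper1 E.N_pos (Real.exp_pos _) (norm_nonneg _) (hC s)

lemma u_norm_le [CompleteSpace X] (hfc : Continuous f) {C : ℝ}
    (hC : ∀ s, ‖f s‖ ≤ C) (t : ℝ) :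
    ‖∫ s, E.G t s (f s)‖ ≤ E.N * C * (2 / E.β) := by
  have hb := integrable_exp_abs E.β_pos t
  have h1 : ‖∫ s, E.G t s (f s)‖ ≤ ∫ s, E.N * C * Real.exp (-E.β * |s - t|) := by
    refine norm_integral_le_of_norm_le (hb.1.const_mul _) ?_
    refine Filter.Eventually.of_forall (fun s => ?_)
    calc ‖E.G t s (f s)‖ ≤ E.N * Real.exp (-E.β * |t - s|) * ‖f s‖ := E.G_norm t s (f s)
    _ ≤ E.N * C * Real.exp (-E.β * |s - t|) := by
        rw [abs_sub_comm t s]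
        exact bound_helper1 E.N_pos (Real.exp_pos _) (norm_nonneg _) (hC s)
  have h2 : ∫ s, E.N * C * Real.exp (-E.β * |s - t|) =
      E.N * C * ∫ s, Real.exp (-E.β * |s - t|) := integral_const_mul _ _
  rw [h2, hb.2] at h1
  exact h1

lemma u_continuous [CompleteSpace X] (hfc : Continuous f) {C : ℝ}
    (hC : ∀ s, ‖f s‖ ≤ C) :
    Continuous (fun t => ∫ s, E.G t s (f s)) := by
  rw [continuous_iff_continuousAt]
  intro t₀
  refine continuousAt_of_dominated (F := fun t s => E.G t s (f s))
    (bound := fun s => E.N * C * Real.exp E.β * Real.exp (-E.β * |t₀ - s|)) ?_ ?_ ?_ ?_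
  · exact Filter.Eventually.of_forall (fun t => E.aesm_integrand hfc t)
  · have hev : ∀ᶠ t in nhds t₀, |t - t₀| ≤ 1 := by
      have : Filter.Tendsto (fun t => |t - t₀|) (nhds t₀) (nhds |t₀ - t₀|) := by
        exact (continuous_abs.comp (continuous_id.sub continuous_const)).tendsto t₀
      rw [sub_self, abs_zero] at this
      exact this.eventually (eventually_le_nhds (by norm_num))
    filter_upwards [hev] with t ht
    refine Filter.Eventually.of_forall (fun s => ?_)
    have h1 : ‖E.G t s (f s)‖ ≤ E.N * Real.exp (-E.β * |t - s|) * ‖f s‖ := E.G_norm t s (f s)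
    have h2 : Real.exp (-E.β * |t - s|) ≤ Real.exp E.β * Real.exp (-E.β * |t₀ - s|) := by
      rw [← Real.exp_add]
      apply Real.exp_le_exp.mpr
      have h3 : |t₀ - s| ≤ |t - s| + 1 := by
        calc |t₀ - s| ≤ |t₀ - t| + |t - s| := abs_sub_le t₀ t s
        _ ≤ |t - s| + 1 := by rw [abs_sub_comm t₀ t]; linarith
      nlinarith [E.β_pos]
    have h4 := hC s
    calc ‖E.G t s (f s)‖ ≤ E.N * Real.exp (-E.β * |t - s|) * ‖f s‖ := h1
    _ ≤ E.N * (Real.exp E.β * Real.exp (-E.β * |t₀ - s|)) * C := by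
        exact bound_helper2 E.N_pos (Real.exp_pos _) h2 (norm_nonneg _) h4
    _ = E.N * C * Real.exp E.β * Real.exp (-E.β * |t₀ - s|) := by ring
  · have := ((integrable_exp_abs E.β_pos t₀).1.const_mul (E.N * C * Real.exp E.β))
    simpa [mul_assoc, abs_sub_comm] using this
  · have h0 : ∀ᵐ s : ℝ ∂volume, s ≠ t₀ := by
      have hset : {s : ℝ | ¬ s ≠ t₀} = {t₀} := by ext s; simp
      rw [MeasureTheory.ae_iff, hset]
      exact measure_singleton t₀
    filter_upwards [h0] with s hs
    rcases lt_or_gt_of_ne hs with hlt | hgt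
    · -- s < t₀ : use formula U t s (P s (f s)) for t > s
      have hU : Filter.Tendsto (fun t => E.U t s (E.P s (f s))) (nhds t₀)
          (nhds (E.U t₀ s (E.P s (f s)))) := by
        refine E.tendsto_U hlt.le tendsto_id tendsto_const_nhds ?_ (E.P s (f s))
        exact eventually_ge_nhds hlt
      rw [← E.G_lt hlt] at hU
      refine hU.congr' ?_
      filter_upwards [eventually_gt_nhds hlt] with t ht
      exact (E.G_lt ht (f s)).symm
    · -- s > t₀
      have hV := (E.tendsto_V_fst hgt (f s)).neg
      rw [← E.G_ge hgt.le] at hV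
      refine hV.congr' ?_
      filter_upwards [eventually_lt_nhds hgt] with t ht
      exact (E.G_ge ht.le (f s)).symm

end EvolutionDichotomy

end Aux5
section Aux6

open Set MeasureTheory

lemma AlmostPeriodic.unif_cont {X : Type*} [NormedAddCommGroup X] {f : ℝ → X}
    (hf : AlmostPeriodic f) {ε : ℝ} (hε : 0 < ε) :
    ∃ δ > (0:ℝ), ∀ x y : ℝ, |x - y| ≤ δ → ‖f x - f y‖ ≤ ε := by
  obtain ⟨hc, -, hap⟩ := hf
  obtain ⟨l, hl, hT⟩ := hap (ε/3) (by linarith)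
  have hcomp : IsCompact (Icc (-1:ℝ) (l+1)) := isCompact_Icc
  have huc : UniformContinuousOn f (Icc (-1:ℝ) (l+1)) :=
    hcomp.uniformContinuousOn_of_continuous (hc.continuousOn)
  rw [Metric.uniformContinuousOn_iff] at huc
  obtain ⟨δ₀, hδ₀, hδ⟩ := huc (ε/3) (by linarith)
  refine ⟨min (δ₀/2) 1, by positivity, fun x y hxy => ?_⟩
  obtain ⟨T, hTmem, hTap⟩ := hT (-x)
  have hx1 : x + T ∈ Icc (-1:ℝ) (l+1) := by
    obtain ⟨h1, h2⟩ := hTmem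
    constructor <;> [linarith; linarith]
  have hy1 : y + T ∈ Icc (-1:ℝ) (l+1) := by
    obtain ⟨h1, h2⟩ := hTmem
    have h3 := abs_le.mp (hxy.trans (min_le_right _ _))
    constructor <;> [linarith [h3.1, h3.2]; linarith [h3.1, h3.2]]
  have hmid : ‖f (x + T) - f (y + T)‖ ≤ ε/3 := by
    have hd : dist (x + T) (y + T) < δ₀ := by
      rw [Real.dist_eq]
      have h3 := hxy.trans (min_le_left _ _)
      have : x + T - (y + T) = x - y := by ring
      rw [this]
      linarith [abs_le.mp h3, abs_nonneg (x - y), hδ₀]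
    have := hδ _ hx1 _ hy1 hd
    rw [dist_eq_norm] at this
    exact this.le
  have h1 := hTap x
  have h2 := hTap y
  calc ‖f x - f y‖ = ‖(f x - f (x + T)) + (f (x + T) - f (y + T)) + (f (y + T) - f y)‖ := by
        congr 1; abel
  _ ≤ ‖(f x - f (x + T)) + (f (x + T) - f (y + T))‖ + ‖f (y + T) - f y‖ := norm_add_le _ _
  _ ≤ ‖f x - f (x + T)‖ + ‖f (x + T) - f (y + T)‖ + ‖f (y + T) - f y‖ := by
        have := norm_add_le (f x - f (x + T)) (f (x + T) - f (y + T))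
        linarith
  _ ≤ ε/3 + ε/3 + ε/3 := by
        rw [norm_sub_rev (f x)]
        exact add_le_add (add_le_add h1.le hmid) h2.le
  _ = ε := by ring

lemma EvolutionDichotomy.common_ap {X : Type*} [NormedAddCommGroup X] [NormedSpace ℝ X]
    (E : EvolutionDichotomy X) (hE : E.ExpAP) {f : ℝ → X} (hf : AlmostPeriodic f)
    {η ε : ℝ} (hη : 0 < η) (hε : 0 < ε) :
    ∃ γ > (0:ℝ), ∃ l > (0:ℝ), ∀ a : ℝ, ∃ T ∈ Set.Icc a (a + l),
      (∀ t, ‖f (t + T) - f t‖ ≤ ε) ∧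
      (∀ t s : ℝ, η ≤ |t - s| →
        ‖E.G (t + T) (s + T) - E.G t s‖ ≤ ε * Real.exp (-γ * |t - s|)) := by
  classical
  set ε4 := ε/4 with hε4
  have hε4pos : 0 < ε4 := by rw [hε4]; linarith
  obtain ⟨γ, hγ, lG, hlG, hG⟩ := hE η hη ε4 hε4pos
  set PG : ℝ → Prop := fun T => ∀ t s : ℝ, η ≤ |t - s| →
    ‖E.G (t + T) (s + T) - E.G t s‖ ≤ ε4 * Real.exp (-γ * |t - s|) with hPGdef
  -- difference property of PG
  have hPGdiff : ∀ T T', PG T → PG T' → ∀ t s : ℝ, η ≤ |t - s| →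
      ‖E.G (t + (T - T')) (s + (T - T')) - E.G t s‖ ≤ ε * Real.exp (-γ * |t - s|) := by
    intro T T' h1 h2 t s hts
    have hab : η ≤ |(t - T') - (s - T')| := by
      have : t - T' - (s - T') = t - s := by ring
      rw [this]; exact hts
    have e1 := h1 (t - T') (s - T') hab
    have e2 := h2 (t - T') (s - T') hab
    have hr1 : t - T' + T' = t := by ring
    have hr2 : s - T' + T' = s := by ring
    have hr3 : t - T' + T = t + (T - T') := by ring
    have hr4 : s - T' + T = s + (T - T') := by ring
    have hr5 : t - T' - (s - T') = t - s := by ring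
    rw [hr1, hr2, hr5] at e2
    rw [hr3, hr4, hr5] at e1
    have hsplit : E.G (t + (T - T')) (s + (T - T')) - E.G t s =
        (E.G (t + (T - T')) (s + (T - T')) - E.G (t - T') (s - T')) -
        (E.G t s - E.G (t - T') (s - T')) := by abel
    rw [hsplit]
    have hnorm := norm_sub_le (E.G (t + (T - T')) (s + (T - T')) - E.G (t - T') (s - T'))
      (E.G t s - E.G (t - T') (s - T'))
    have hexp := Real.exp_pos (-γ * |t - s|)
    have : ε4 + ε4 ≤ ε := by rw [hε4]; linarith
    nlinarith [hnorm, e1, e2]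
  -- uniform continuity of f
  obtain ⟨δ, hδpos, hδ⟩ := hf.unif_cont hε4pos
  obtain ⟨lf, hlf, hTf⟩ := hf.2.2 ε4 hε4pos
  set m : ℕ := ⌈lf / δ⌉₊ + 1 with hm
  set cls : ℕ → ℝ → Prop := fun j h => ∀ t, ‖f (t + h) - f (t + (j:ℝ) * δ)‖ ≤ 2 * ε4
    with hclsdef
  -- every h belongs to some class
  have hclass : ∀ h : ℝ, ∃ j : ℕ, j < m ∧ cls j h := by
    intro h
    obtain ⟨T, hTmem, hTap⟩ := hTf (-h)
    set r := h + T with hr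
    have hr0 : 0 ≤ r := by obtain ⟨h1, h2⟩ := hTmem; rw [hr]; linarith
    have hrlf : r ≤ lf := by obtain ⟨h1, h2⟩ := hTmem; rw [hr]; linarith
    set j : ℕ := ⌊r / δ⌋₊ with hj
    have hj1 : (j:ℝ) * δ ≤ r := by
      have h1 : (j:ℝ) ≤ r / δ := Nat.floor_le (by positivity)
      calc (j:ℝ) * δ ≤ (r / δ) * δ := by nlinarith
      _ = r := by field_simp
    have hj2 : r < ((j:ℝ) + 1) * δ := by
      have h1 : r / δ < (j:ℝ) + 1 := Nat.lt_floor_add_one (r / δ)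
      calc r = (r / δ) * δ := by field_simp
      _ < ((j:ℝ) + 1) * δ := by nlinarith
    refine ⟨j, ?_, ?_⟩
    · have h1 : (j : ℝ) ≤ (⌈lf / δ⌉₊ : ℝ) := by
        refine le_trans (Nat.floor_le (by positivity)) (le_trans ?_ (Nat.le_ceil _))
        gcongr
      have h2 : j ≤ ⌈lf / δ⌉₊ := Nat.cast_le.mp h1
      rw [hm]
      omega
    · intro t
      have h1 : ‖f (t + h + T) - f (t + h)‖ < ε4 := hTap (t + h)
      have hrw : t + h + T = t + r := by rw [hr]; ring
      rw [hrw] at h1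
      have h2 : ‖f (t + r) - f (t + (j:ℝ) * δ)‖ ≤ ε4 := by
        refine hδ _ _ ?_
        have : t + r - (t + (j:ℝ) * δ) = r - (j:ℝ) * δ := by ring
        rw [this, abs_le]
        constructor <;> nlinarith
      calc ‖f (t + h) - f (t + (j:ℝ) * δ)‖
          ≤ ‖f (t + h) - f (t + r)‖ + ‖f (t + r) - f (t + (j:ℝ) * δ)‖ := by
            have := norm_add_le (f (t + h) - f (t + r)) (f (t + r) - f (t + (j:ℝ) * δ))
            have heq : f (t + h) - f (t + (j:ℝ) * δ) =
                (f (t + h) - f (t + r)) + (f (t + r) - f (t + (j:ℝ) * δ)) := by abel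
            rw [heq]; exact this
      _ ≤ ε4 + ε4 := by
            rw [norm_sub_rev (f (t+h))]
            exact add_le_add h1.le h2
      _ = 2 * ε4 := by ring
  -- representatives
  set Rep : ℕ → ℝ := fun j => if hj : ∃ T, PG T ∧ cls j T then hj.choose else 0 with hRepdef
  have hRep : ∀ j : ℕ, (∃ T, PG T ∧ cls j T) → PG (Rep j) ∧ cls j (Rep j) := by
    intro j hj
    simp only [hRepdef, dif_pos hj]
    exact hj.choose_spec
  set M : ℝ := ∑ j ∈ Finset.range m, |Rep j| with hM
  have hMb : ∀ j, j < m → |Rep j| ≤ M := by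
    intro j hj
    exact Finset.single_le_sum (f := fun i => |Rep i|) (fun i _ => abs_nonneg _)
      (Finset.mem_range.mpr hj)
  have hM0 : 0 ≤ M := Finset.sum_nonneg fun i _ => abs_nonneg _
  refine ⟨γ, hγ, lG + 2 * M + 1, by linarith, fun a => ?_⟩
  obtain ⟨h, hhmem, hhPG⟩ := hG (a + M)
  obtain ⟨j, hjm, hjcls⟩ := hclass h
  have hex : ∃ T, PG T ∧ cls j T := ⟨h, hhPG, hjcls⟩
  obtain ⟨hRepPG, hRepcls⟩ := hRep j hex
  have hMbj := hMb j hjm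
  have habs := abs_le.mp hMbj
  refine ⟨h - Rep j, ?_, ?_, ?_⟩
  · obtain ⟨h1, h2⟩ := hhmem
    constructor
    · linarith [habs.2]
    · linarith [habs.1]
  · -- f almost period
    intro t
    have e1 := hjcls (t - Rep j)
    have e2 := hRepcls (t - Rep j)
    have hr1 : t - Rep j + h = t + (h - Rep j) := by ring
    have hr2 : t - Rep j + Rep j = t := by ring
    rw [hr1] at e1
    rw [hr2] at e2
    calc ‖f (t + (h - Rep j)) - f t‖
        ≤ ‖f (t + (h - Rep j)) - f (t - Rep j + (j:ℝ) * δ)‖ +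
          ‖f (t - Rep j + (j:ℝ) * δ) - f t‖ := by
          have heq : f (t + (h - Rep j)) - f t =
              (f (t + (h - Rep j)) - f (t - Rep j + (j:ℝ) * δ)) +
              (f (t - Rep j + (j:ℝ) * δ) - f t) := by abel
          rw [heq]; exact norm_add_le _ _
    _ ≤ 2 * ε4 + 2 * ε4 := by
          rw [norm_sub_rev (f (t - Rep j + (j:ℝ) * δ))]
          exact add_le_add e1 e2
    _ = ε := by rw [hε4]; ring
  · -- G almost period
    intro t s hts
    have := hPGdiff h (Rep j) hhPG hRepPG t s hts
    exact this

end Aux6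
section Main

open Set MeasureTheory

private lemma geo_mean {A a b c : ℝ} (hA0 : 0 ≤ A) (h1 : A ≤ a) (h2 : A ≤ b)
    (hab : a * b ≤ c ^ 2) (hc : 0 ≤ c) : A ≤ c := by
  nlinarith [mul_le_mul h1 h2 hA0 (le_trans hA0 h1)]

set_option maxHeartbeats 1000000 in
theorem green_convolution_almost_periodic_aux
    {X : Type*} [NormedAddCommGroup X] [NormedSpace ℝ X] [CompleteSpace X]
    (E : EvolutionDichotomy X) (hE : E.ExpAP)
    (f : ℝ → X) (hf : AlmostPeriodic f) :
    AlmostPeriodic (fun t : ℝ => ∫ s : ℝ, E.G t s (f s)) := by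
  obtain ⟨hfc, hfb, hfap⟩ := hf
  obtain ⟨C0, hC0⟩ := isBounded_iff_forall_norm_le.mp hfb
  have hC : ∀ s, ‖f s‖ ≤ C0 := fun s => hC0 _ (Set.mem_range_self s)
  set C := C0 + 1 with hCdef
  have hCpos : 0 < C := by
    have h1 := (norm_nonneg (f 0)).trans (hC 0); rw [hCdef]; linarith
  have hC' : ∀ s, ‖f s‖ ≤ C := fun s => by have := hC s; rw [hCdef]; linarith
  have hfAP : AlmostPeriodic f := ⟨hfc, hfb, hfap⟩
  have hN := E.N_pos
  have hβ := E.β_pos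
  refine ⟨E.u_continuous hfc hC', ?_, ?_⟩
  · rw [isBounded_iff_forall_norm_le]
    refine ⟨E.N * C * (2 / E.β), ?_⟩
    rintro x ⟨t, rfl⟩
    exact E.u_norm_le hfc hC' t
  · intro ε hε
    set η := ε / (16 * E.N * C) with hηdef
    have hηpos : 0 < η := by rw [hηdef]; positivity
    set κ := ε * E.β / (16 * C) with hκdef
    have hκpos : 0 < κ := by rw [hκdef]; positivity
    set ε' := min (κ^2 / (2 * E.N)) (ε * E.β / (8 * E.N)) with hε'def
    have hε'pos : 0 < ε' := lt_min (by positivity) (by positivity)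
    have hε'1 : 2 * E.N * ε' ≤ κ^2 := by
      have h1 : ε' ≤ κ^2 / (2 * E.N) := min_le_left _ _
      rw [le_div_iff₀ (by positivity)] at h1
      linarith
    have hε'2 : ε' ≤ ε * E.β / (8 * E.N) := min_le_right _ _
    obtain ⟨γ, hγpos, l, hlpos, hT⟩ := E.common_ap hE hfAP hηpos hε'pos
    refine ⟨l, hlpos, fun a => ?_⟩
    obtain ⟨T, hTmem, hfper, hGper⟩ := hT a
    refine ⟨T, hTmem, fun t => ?_⟩
    -- integrability facts
    have hg1 : Integrable (fun σ => E.G (t+T) σ (f σ)) := E.integrable_integrand hfc hC' (t+T)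
    have hg2 : Integrable (fun s => E.G t s (f s)) := E.integrable_integrand hfc hC' t
    have hf'c : Continuous (fun σ => f (σ - T)) := hfc.comp (continuous_id.sub continuous_const)
    have hf'b : ∀ σ, ‖f (σ - T)‖ ≤ C := fun σ => hC' _
    have hgm0 : Integrable (fun σ => E.G (t+T) σ (f (σ - T))) :=
      E.integrable_integrand hf'c hf'b (t+T)
    have hgm : Integrable (fun s => E.G (t+T) (s+T) (f s)) := by
      have h1 := hgm0.comp_add_right T
      refine h1.congr (Filter.Eventually.of_forall (fun s => ?_))
      simp
    have hg1s : Integrable (fun s => E.G (t+T) (s+T) (f (s+T))) := hg1.comp_add_right T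
    set FA : ℝ → X := fun s => E.G (t+T) (s+T) (f s) - E.G t s (f s) with hFAdef
    set FB : ℝ → X := fun s => E.G (t+T) (s+T) (f (s+T)) - E.G (t+T) (s+T) (f s) with hFBdef
    have hFA_int : Integrable FA := hgm.sub hg2
    have hFB_int : Integrable FB := hg1s.sub hgm
    -- rewrite the difference
    have hshift : (∫ σ, E.G (t+T) σ (f σ)) = ∫ s, E.G (t+T) (s+T) (f (s+T)) :=
      (integral_add_right_eq_self (fun σ => E.G (t+T) σ (f σ)) T).symm
    have hdiff : (∫ σ, E.G (t+T) σ (f σ)) - (∫ s, E.G t s (f s)) = (∫ s, FA s) + ∫ s, FB s := by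
      rw [hshift, ← integral_sub hg1s hg2, ← integral_add hFA_int hFB_int]
      congr 1
      funext s
      rw [hFAdef, hFBdef]
      beta_reduce
      abel
    -- FB bound
    have hFBle : ‖∫ s, FB s‖ ≤ E.N * ε' * (2 / E.β) := by
      have hbint := (integrable_exp_abs hβ t).1.const_mul (E.N * ε')
      have h1 : ‖∫ s, FB s‖ ≤ ∫ s, E.N * ε' * Real.exp (-E.β * |s - t|) := by
        refine norm_integral_le_of_norm_le hbint (Filter.Eventually.of_forall (fun s => ?_))
        have heq : FB s = E.G (t+T) (s+T) (f (s+T) - f s) := by rw [hFBdef, map_sub]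
        rw [heq]
        have h2 := E.G_norm (t+T) (s+T) (f (s+T) - f s)
        have h3 : t + T - (s + T) = t - s := by ring
        rw [h3] at h2
        refine h2.trans ?_
        rw [abs_sub_comm t s]
        exact bound_helper1 hN (Real.exp_pos _) (norm_nonneg _) (hfper s)
      rw [integral_const_mul, (integrable_exp_abs hβ t).2] at h1
      exact h1
    -- FA bound
    have hFAnorm : Integrable (fun s => ‖FA s‖) := hFA_int.norm
    have hsplitFA : ∫ s, ‖FA s‖ =
        (∫ s in Icc (t-η) (t+η), ‖FA s‖) + ∫ s in (Icc (t-η) (t+η))ᶜ, ‖FA s‖ :=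
      (integral_add_compl measurableSet_Icc hFAnorm).symm
    have hFA2NC : ∀ s, ‖FA s‖ ≤ 2 * E.N * C * Real.exp (-E.β * |t - s|) := by
      intro s
      have h1 := E.G_norm (t+T) (s+T) (f s)
      have h3 : t + T - (s + T) = t - s := by ring
      rw [h3] at h1
      have h2 := E.G_norm t s (f s)
      have h4 : ‖FA s‖ ≤ ‖E.G (t+T) (s+T) (f s)‖ + ‖E.G t s (f s)‖ := by
        rw [hFAdef]; exact norm_sub_le _ _
      have h5 := hC' s
      have h6 := Real.exp_pos (-E.β * |t - s|)
      nlinarith [norm_nonneg (f s), mul_pos hN h6]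
    have hIcc : (∫ s in Icc (t-η) (t+η), ‖FA s‖) ≤ 2 * E.N * C * (2 * η) := by
      have hle : ∀ s ∈ Icc (t-η) (t+η), ‖FA s‖ ≤ 2 * E.N * C := by
        intro s _
        refine (hFA2NC s).trans ?_
        have h6 := E.exp_fac_le_one t s
        have h7 := Real.exp_pos (-E.β * |t - s|)
        nlinarith [mul_pos (mul_pos hN hCpos) h7]
      have h1 : (∫ s in Icc (t-η) (t+η), ‖FA s‖) ≤ ∫ _ in Icc (t-η) (t+η), (2 * E.N * C) :=
        setIntegral_mono_on hFAnorm.integrableOn (integrableOn_const measure_Icc_lt_top.ne) measurableSet_Icc hle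
      rw [setIntegral_const] at h1
      rw [Real.volume_real_Icc] at h1
      have h2 : t + η - (t - η) = 2 * η := by ring
      rw [h2, max_eq_left (by linarith)] at h1
      refine h1.trans ?_
      rw [smul_eq_mul]
      nlinarith
    have hcompl : (∫ s in (Icc (t-η) (t+η))ᶜ, ‖FA s‖) ≤ C * κ * (2 / (E.β/2)) := by
      have hbint := (integrable_exp_abs (by linarith : 0 < E.β/2) t).1.const_mul (C * κ)
      have hptwise : ∀ s ∈ (Icc (t-η) (t+η))ᶜ,
          ‖FA s‖ ≤ C * κ * Real.exp (-(E.β/2) * |s - t|) := by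
        intro s hs
        have hout : η ≤ |t - s| := by
          rw [mem_compl_iff, mem_Icc, not_and_or] at hs
          rcases hs with h | h
          · push_neg at h; rw [abs_of_pos (by linarith)]; linarith
          · push_neg at h; rw [abs_of_neg (by linarith)]; linarith
        set e := Real.exp (-(E.β/2) * |t - s|) with hedef
        have hepos : 0 < e := Real.exp_pos _
        have hesq : e * e = Real.exp (-E.β * |t - s|) := by
          rw [hedef, ← Real.exp_add]; congr 1; ring
        have hA1 : ‖FA s‖ ≤ C * ε' := by
          have h1 : FA s = (E.G (t+T) (s+T) - E.G t s) (f s) := by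
            rw [hFAdef, ContinuousLinearMap.sub_apply]
          rw [h1]
          have h2 := (E.G (t+T) (s+T) - E.G t s).le_opNorm (f s)
          have h3 := hGper t s hout
          have h4 : Real.exp (-γ * |t - s|) ≤ 1 := by
            rw [← Real.exp_zero]
            apply Real.exp_le_exp.mpr
            nlinarith [abs_nonneg (t - s)]
          have h5 := hC' s
          nlinarith [mul_le_mul h3 h5 (norm_nonneg (f s))
              (mul_nonneg hε'pos.le (Real.exp_pos (-γ * |t - s|)).le),
            mul_pos hε'pos hCpos, norm_nonneg (E.G (t+T) (s+T) - E.G t s),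
            Real.exp_pos (-γ * |t - s|)]
        have hA2 : ‖FA s‖ ≤ 2 * E.N * C * (e * e) := by rw [hesq]; exact hFA2NC s
        have hgoal : ‖FA s‖ ≤ C * κ * e := by
          refine geo_mean (norm_nonneg _) hA1 hA2 ?_ (by positivity)
          have h6 : C * ε' * (2 * E.N * C * (e * e)) = C^2 * (e*e) * (2 * E.N * ε') := by ring
          rw [h6]
          have h7 : (C * κ * e)^2 = C^2 * (e*e) * κ^2 := by ring
          rw [h7]
          have h8 : 0 ≤ C^2 * (e*e) := by positivity
          nlinarith
        rw [hedef, abs_sub_comm t s] at hgoal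
        exact hgoal
      have h1 : (∫ s in (Icc (t-η) (t+η))ᶜ, ‖FA s‖) ≤
          ∫ s in (Icc (t-η) (t+η))ᶜ, C * κ * Real.exp (-(E.β/2) * |s - t|) :=
        setIntegral_mono_on hFAnorm.integrableOn hbint.integrableOn
          measurableSet_Icc.compl hptwise
      have h2 : (∫ s in (Icc (t-η) (t+η))ᶜ, C * κ * Real.exp (-(E.β/2) * |s - t|)) ≤
          ∫ s, C * κ * Real.exp (-(E.β/2) * |s - t|) := by
        refine setIntegral_le_integral hbint (Filter.Eventually.of_forall (fun s => ?_))
        positivity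
      have h3 : (∫ s, C * κ * Real.exp (-(E.β/2) * |s - t|)) = C * κ * (2 / (E.β/2)) := by
        rw [integral_const_mul, (integrable_exp_abs (by linarith : 0 < E.β/2) t).2]
      linarith
    -- put everything together
    have hFAle : ‖∫ s, FA s‖ ≤ 2 * E.N * C * (2 * η) + C * κ * (2 / (E.β/2)) := by
      refine (norm_integral_le_integral_norm FA).trans ?_
      rw [hsplitFA]
      exact add_le_add hIcc hcompl
    have htotal : ‖(∫ σ, E.G (t+T) σ (f σ)) - ∫ s, E.G t s (f s)‖ ≤
        2 * E.N * C * (2 * η) + C * κ * (2 / (E.β/2)) + E.N * ε' * (2 / E.β) := by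
      rw [hdiff]
      refine (norm_add_le _ _).trans ?_
      exact add_le_add hFAle hFBle
    have hnum1 : 2 * E.N * C * (2 * η) = ε / 4 := by
      rw [hηdef]; field_simp; ring
    have hnum2 : C * κ * (2 / (E.β/2)) = ε / 4 := by
      rw [hκdef]; field_simp; ring
    have hnum3 : E.N * ε' * (2 / E.β) ≤ ε / 4 := by
      have h2 : 0 < 2 / E.β := by positivity
      have h1 : E.N * ε' * (2 / E.β) ≤ E.N * (ε * E.β / (8 * E.N)) * (2 / E.β) := by
        nlinarith [mul_pos hN h2, hε'2]
      refine h1.trans ?_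
      have h3 : E.N * (ε * E.β / (8 * E.N)) * (2 / E.β) = ε / 4 := by
        field_simp
        ring
      rw [h3]
    calc ‖(fun t => ∫ s, E.G t s (f s)) (t + T) - (fun t => ∫ s, E.G t s (f s)) t‖
        = ‖(∫ σ, E.G (t+T) σ (f σ)) - ∫ s, E.G t s (f s)‖ := rfl
    _ ≤ 2 * E.N * C * (2 * η) + C * κ * (2 / (E.β/2)) + E.N * ε' * (2 / E.β) := htotal
    _ ≤ ε / 4 + ε / 4 + ε / 4 := by rw [hnum1, hnum2]; linarith
    _ < ε := by linarith

end Main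

/-- if the Green function is exponentially almost periodic and `f` is
almost periodic, then `u(t) = ∫_ℝ G(t,s) f(s) ds` is almost periodic. -/
theorem green_convolution_almost_periodic
    {X : Type*} [NormedAddCommGroup X] [NormedSpace ℝ X] [CompleteSpace X]
    (E : EvolutionDichotomy X) (hE : E.ExpAP)
    (f : ℝ → X) (hf : AlmostPeriodic f) :
    AlmostPeriodic (fun t : ℝ => ∫ s : ℝ, E.G t s (f s)) := by
  exact green_convolution_almost_periodic_aux E hE f hf
end
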